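/- For every positive integer k and every x ∈ P¹(F), the k-th iterate of θ satisfies θ^k(x) = ψ(s^k(ψ(x))). -/

import Mathlib

open OnePoint

variable (F : Type*) [Field F] [DecidableEq F]

/-- The map `θ(x) = x + x⁻¹`, with `θ(0) = θ(∞) = ∞`. -/
def theta : OnePoint F → OnePoint F
  | Option.some x => if x = 0 then ∞ else Option.some (x + x⁻¹)
  | Option.none => ∞

/-- The inverse-square map `s(x) = x⁻²`, with `s(0) = ∞`, `s(∞) = 0`. -/
def sMap : OnePoint F → OnePoint F
  | Option.some x => if x = 0 then ∞ else Option.some (x⁻¹ ^ 2)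
  | Option.none => Option.some 0

/-- The involution `ψ(x) = (x+1)/(x-1)`, with `ψ(1) = ∞`, `ψ(∞) = 1`. -/
def psi : OnePoint F → OnePoint F
  | Option.some x => if x = 1 then ∞ else Option.some ((x + 1) / (x - 1))
  | Option.none => Option.some 1

lemma psi_coe (x : F) :
    psi F (x : OnePoint F) = if x = 1 then ∞ else ((x + 1) / (x - 1) : F) := rfl

lemma psi_infty : psi F ∞ = ((1 : F) : OnePoint F) := rfl

lemma sMap_coe (x : F) :
    sMap F (x : OnePoint F) = if x = 0 then ∞ else ((x⁻¹ ^ 2 : F) : OnePoint F) := rfl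

lemma sMap_infty : sMap F ∞ = ((0 : F) : OnePoint F) := rfl

lemma theta_coe (x : F) :
    theta F (x : OnePoint F) = if x = 0 then ∞ else ((x + x⁻¹ : F) : OnePoint F) := rfl

lemma theta_infty : theta F ∞ = ∞ := rfl

lemma twoNeZero [CharP F 3] : (2 : F) ≠ 0 := by
  have : ((2 : ℕ) : F) ≠ 0 := by
    rw [Ne, CharP.cast_eq_zero_iff F 3]
    decide
  simpa using this

lemma threeEqZero [CharP F 3] : (3 : F) = 0 := by
  have := CharP.cast_eq_zero F 3; simpa using this

lemma psi_psi [CharP F 3] (y : OnePoint F) : psi F (psi F y) = y := by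
  have h2 : (2 : F) ≠ 0 := twoNeZero F
  cases y with
  | infty =>
    rw [psi_infty, psi_coe, if_pos rfl]
  | coe x =>
    by_cases hx : x = 1
    · rw [hx, psi_coe, if_pos rfl, psi_infty]
    · have hx1 : x - 1 ≠ 0 := sub_ne_zero.mpr hx
      have hne : (x + 1) / (x - 1) ≠ 1 := by
        intro h
        rw [div_eq_one_iff_eq hx1] at h
        exact h2 (by linear_combination h)
      rw [psi_coe, if_neg hx, psi_coe, if_neg hne]
      congr 1
      field_simp
      rw [show x + 1 + (x - 1) = x * 2 by ring, show x + 1 - (x - 1) = 2 by ring,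
        mul_div_assoc, div_self h2, mul_one]

lemma conj [CharP F 3] (x : OnePoint F) :
    theta F x = psi F (sMap F (psi F x)) := by
  have h2 : (2 : F) ≠ 0 := twoNeZero F
  have h3 : (3 : F) = 0 := threeEqZero F
  cases x with
  | infty =>
    rw [theta_infty, psi_infty, sMap_coe, if_neg one_ne_zero, psi_coe]
    norm_num
  | coe x =>
    by_cases h0 : x = 0
    · subst h0
      have e1 : ((0:F)+1)/((0:F)-1) = -1 := by norm_num
      rw [theta_coe, if_pos rfl, psi_coe,
        if_neg (fun h => one_ne_zero h.symm), e1,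
        sMap_coe, if_neg (by norm_num), psi_coe, if_pos (by norm_num)]
    · by_cases h1 : x = 1
      · subst h1
        rw [theta_coe, if_neg one_ne_zero, psi_coe, if_pos rfl, sMap_infty,
          psi_coe, if_neg (fun h => one_ne_zero (by linear_combination -h))]
        congr 1
        rw [inv_one, show ((0:F)+1)/((0:F)-1) = -1 by norm_num]
        linear_combination h3
      · have hx1 : x - 1 ≠ 0 := sub_ne_zero.mpr h1
        have hyne1 : (x + 1) / (x - 1) ≠ 1 := by
          intro h
          rw [div_eq_one_iff_eq hx1] at h
          exact h2 (by linear_combination h)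
        rw [theta_coe, if_neg h0, psi_coe, if_neg h1, sMap_coe]
        by_cases hm : x = -1
        · subst hm
          rw [if_pos (by rw [div_eq_zero_iff]; left; ring), psi_infty]
          congr 1
          rw [show ((-1:F))⁻¹ = -1 by norm_num]
          linear_combination -h3
        · have hxp1 : x + 1 ≠ 0 := fun h => hm (by linear_combination h)
          have hy0 : (x + 1) / (x - 1) ≠ 0 := div_ne_zero hxp1 hx1
          rw [if_neg hy0]
          have hz : ((x+1)/(x-1))⁻¹ ^ 2 = (x-1)^2/(x+1)^2 := by
            rw [inv_div, div_pow]
          have hden : (x-1)^2/(x+1)^2 - 1 ≠ 0 := by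
            have e : (x-1)^2/(x+1)^2 - 1 = (2*x)/(x+1)^2 := by
              rw [div_sub' (pow_ne_zero _ hxp1)]
              congr 1
              linear_combination -2*x*h3
            rw [e]
            exact div_ne_zero (mul_ne_zero h2 h0) (pow_ne_zero _ hxp1)
          have hne1' : ((x+1)/(x-1))⁻¹ ^ 2 ≠ 1 := by
            rw [hz]
            intro h
            exact hden (by rw [h]; ring)
          rw [psi_coe, if_neg hne1']
          congr 1
          rw [hz, eq_div_iff hden]
          field_simp
          ring_nf
          linear_combination (-2*x - 2*x^3) * h3

theorem theta_iterate_eq [CharP F 3] (k : ℕ) (hk : 0 < k) (x : OnePoint F) :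
    (theta F)^[k] x = psi F ((sMap F)^[k] (psi F x)) := by
  clear hk
  induction k generalizing x with
  | zero => simp [psi_psi]
  | succ n ih =>
    rw [Function.iterate_succ_apply, ih, conj, psi_psi, ← Function.iterate_succ_apply]
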